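/- Suppose functions Δ(k) (for 1 ≤ k < n) and given data g(k) satisfy the recursion (n−k)·Δ(k) = (n−1)! − n!·g(k) + Σ_{l=1}^{k−1} Δ(l), where g : {1,...,n} → ℚ. Then for all 1 ≤ k < n, Δ(k) = (n!/((n−k)(n−k+1)))·(1 − g(k)·(n−k+1) − Σ_{l=1}^{k−1} g(l)). -/

import Mathlib

open Finset

/-- Solving the signed-exit-number recursion:
if (n−k)·Δ(k) = (n−1)! − n!·g(k) + Σ_{l=1}^{k−1} Δ(l) for 1 ≤ k < n, then
Δ(k) = n!/((n−k)(n−k+1))·(1 − g(k)(n−k+1) − Σ_{l=1}^{k−1} g(l)). -/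
theorem stmt5 (n : ℕ) (hn : 2 ≤ n) (Δ g : ℕ → ℚ)
    (hrec : ∀ k, 1 ≤ k → k < n →
      ((n : ℚ) - k) * Δ k =
        (Nat.factorial (n - 1) : ℚ) - (Nat.factorial n : ℚ) * g k +
          ∑ l ∈ Finset.Icc 1 (k - 1), Δ l) :
    ∀ k, 1 ≤ k → k < n →
      Δ k = (Nat.factorial n : ℚ) / (((n : ℚ) - k) * ((n : ℚ) - k + 1)) *
        (1 - g k * ((n : ℚ) - k + 1) - ∑ l ∈ Finset.Icc 1 (k - 1), g l) := by
  have hfact : (Nat.factorial n : ℚ) = n * Nat.factorial (n - 1) := by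
    rw [← Nat.mul_factorial_pred (by omega : n ≠ 0)]
    push_cast
    ring
  intro k hk
  induction k, hk using Nat.le_induction with
  | base =>
    intro hlt
    have key := hrec 1 le_rfl hlt
    simp only [Finset.Icc_self, Nat.sub_self, Finset.Icc_eq_empty_of_lt (by omega : (1:ℕ) > 1-1),
      Finset.sum_empty] at *
    have h1 : (1:ℚ) < n := by exact_mod_cast hlt
    have hA : (n:ℚ) - 1 ≠ 0 := sub_ne_zero.mpr (ne_of_gt h1)
    have hB : (n:ℚ) - 1 + 1 ≠ 0 := ne_of_gt (by linarith)
    push_cast at key ⊢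
    rw [div_mul_eq_mul_div, eq_div_iff (mul_ne_zero hA hB)]
    linear_combination ((n:ℚ) - 1 + 1) * key - hfact
  | succ k hk ih =>
    intro hlt
    have hklt : k < n := by omega
    have ih' := ih hklt
    have key1 := hrec (k+1) (by omega) hlt
    have key0 := hrec k hk hklt
    have h1 : k + 1 - 1 = (k-1) + 1 := by omega
    have h2 : k - 1 + 1 = k := by omega
    have hsplit : ∑ l ∈ Icc 1 (k+1-1), Δ l = ∑ l ∈ Icc 1 (k-1), Δ l + Δ k := by
      rw [h1, Finset.sum_Icc_succ_top (by omega), h2]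
    have hgsplit : ∑ l ∈ Icc 1 (k+1-1), g l = ∑ l ∈ Icc 1 (k-1), g l + g k := by
      rw [h1, Finset.sum_Icc_succ_top (by omega), h2]
    rw [hsplit] at key1
    rw [hgsplit]
    have hkn : (k:ℚ) < n := by exact_mod_cast hklt
    have hkn1 : (k:ℚ) + 1 < n := by exact_mod_cast hlt
    have hA : (n:ℚ) - k ≠ 0 := sub_ne_zero.mpr (ne_of_gt hkn)
    have hA1 : (n:ℚ) - k + 1 ≠ 0 := ne_of_gt (by linarith)
    have hB : (n:ℚ) - (k+1) ≠ 0 := ne_of_gt (by linarith)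
    have hC : (n:ℚ) - (k+1) + 1 ≠ 0 := ne_of_gt (by linarith)
    have ihm : Δ k * (((n:ℚ) - k) * ((n:ℚ) - k + 1)) =
        (Nat.factorial n : ℚ) * (1 - g k * ((n:ℚ) - k + 1) - ∑ l ∈ Icc 1 (k-1), g l) := by
      rw [ih']
      field_simp
    push_cast at key1 ⊢
    rw [div_mul_eq_mul_div, eq_div_iff (mul_ne_zero hB hC)]
    linear_combination ((n:ℚ) - k) * key1 - ((n:ℚ) - k) * key0 + ihm
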